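/- Let A ⊆ ℝ^d be a nonempty finite set with mean μ = (1/|A|)∑_{x∈A} x, and let S ⊆ ℝ^d be a nonempty finite set of centers with φ_A(S) ≥ 64·φ_A({μ}). Define B' = {x ∈ A : ‖x−μ‖² ≤ (1/6)·φ_{{μ}}(S)}. Then |A \ B'| ≤ (6/31)·|A|. -/
import Mathlib


open Finset

open scoped Classical

/-- `phiPt x S` is the squared distance from `x` to its nearest center in `S`,
i.e. `min_{s ∈ S} ‖x - s‖²`. -/
noncomputable def phiPt {d : ℕ} (x : EuclideanSpace ℝ (Fin d))
    (S : Finset (EuclideanSpace ℝ (Fin d))) : ℝ :=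
  sInf ((fun s => ‖x - s‖ ^ 2) '' (S : Set (EuclideanSpace ℝ (Fin d))))

/-- `phi A S = ∑_{x ∈ A} min_{s ∈ S} ‖x - s‖²`, the `k`-means cost of centers `S` on `A`. -/
noncomputable def phi {d : ℕ} (A S : Finset (EuclideanSpace ℝ (Fin d))) : ℝ :=
  ∑ x ∈ A, phiPt x S

/-- The mean (centroid) of a finite set of points. -/
noncomputable def mean {d : ℕ} (A : Finset (EuclideanSpace ℝ (Fin d))) :
    EuclideanSpace ℝ (Fin d) :=
  (A.card : ℝ)⁻¹ • ∑ x ∈ A, x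

/-- `rho X S z` is the cost of the centers `S` on `X` after discarding the `z`
points of `X` farthest from `S`: the minimum of `phi Y S` over `Y ⊆ X` with
`|Y| = |X| - z`. -/
noncomputable def rho {d : ℕ} (X S : Finset (EuclideanSpace ℝ (Fin d))) (z : ℕ) : ℝ :=
  sInf ((fun Y : Finset (EuclideanSpace ℝ (Fin d)) => phi Y S) ''
    {Y : Finset (EuclideanSpace ℝ (Fin d)) | Y ⊆ X ∧ Y.card = X.card - z})

lemma phiPt_le' {d : ℕ} (x s : EuclideanSpace ℝ (Fin d))
    (S : Finset (EuclideanSpace ℝ (Fin d))) (hs : s ∈ S) :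
    phiPt x S ≤ ‖x - s‖ ^ 2 := by
  apply csInf_le ((S.finite_toSet.image _).bddBelow)
  exact ⟨s, hs, rfl⟩

lemma phiPt_exists' {d : ℕ} (x : EuclideanSpace ℝ (Fin d))
    (S : Finset (EuclideanSpace ℝ (Fin d))) (hS : S.Nonempty) :
    ∃ s ∈ S, phiPt x S = ‖x - s‖ ^ 2 := by
  obtain ⟨s, hs, hmin⟩ := S.exists_min_image (fun s => ‖x - s‖ ^ 2) hS
  refine ⟨s, hs, le_antisymm (phiPt_le' x s S hs) ?_⟩
  refine le_csInf ⟨_, ⟨s, hs, rfl⟩⟩ ?_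
  rintro b ⟨t, ht, rfl⟩
  exact hmin t ht

/-- If `φ_A(S) ≥ 64·φ_A({μ})`, then the set
`B' = {x ∈ A : ‖x−μ‖² ≤ (1/6)·φ_{{μ}}(S)}` satisfies `|A \ B'| ≤ (6/31)·|A|`. -/
theorem stmt8 {d : ℕ} (A S : Finset (EuclideanSpace ℝ (Fin d)))
    (hA : A.Nonempty) (hS : S.Nonempty)
    (h : phi A S ≥ 64 * phi A {mean A}) :
    (((A \ A.filter (fun x => ‖x - mean A‖ ^ 2 ≤ (1 / 6) * phiPt (mean A) S)).card : ℝ)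
      ≤ (6 / 31) * A.card) := by
  set μ := mean A with hμ
  set T := phiPt μ S with hT
  have hΦeq : phi A {μ} = ∑ x ∈ A, ‖x - μ‖ ^ 2 := by
    refine Finset.sum_congr rfl fun x _ => ?_
    unfold phiPt
    simp
  set Φ := ∑ x ∈ A, ‖x - μ‖ ^ 2 with hΦdef
  have hΦ0 : 0 ≤ Φ := Finset.sum_nonneg fun x _ => by positivity
  obtain ⟨s, hs, hseq⟩ := phiPt_exists' μ S hS
  have hT0 : 0 ≤ T := by rw [hT, hseq]; positivity
  have hub : phi A S ≤ 2 * Φ + 2 * A.card * T := by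
    have hpt : ∀ x ∈ A, phiPt x S ≤ 2 * ‖x - μ‖ ^ 2 + 2 * T := by
      intro x _
      have h1 := phiPt_le' x s S hs
      have h2 : ‖x - s‖ ≤ ‖x - μ‖ + ‖μ - s‖ := norm_sub_le_norm_sub_add_norm_sub x μ s
      have h3 : T = ‖μ - s‖ ^ 2 := hseq
      nlinarith [norm_nonneg (x - μ), norm_nonneg (μ - s), norm_nonneg (x - s),
        sq_nonneg (‖x - μ‖ - ‖μ - s‖)]
    calc phi A S ≤ ∑ x ∈ A, (2 * ‖x - μ‖ ^ 2 + 2 * T) := Finset.sum_le_sum hpt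
      _ = 2 * Φ + 2 * A.card * T := by
          rw [Finset.sum_add_distrib, ← Finset.mul_sum, Finset.sum_const]
          simp [nsmul_eq_mul]
          ring
  have key : 31 * Φ ≤ (A.card : ℝ) * T := by
    rw [hΦeq] at h
    linarith
  set Bad := A \ A.filter (fun x => ‖x - μ‖ ^ 2 ≤ (1 / 6) * T) with hBad
  have hBadA : Bad ⊆ A := Finset.sdiff_subset
  have hBadmem : ∀ x ∈ Bad, ¬ (‖x - μ‖ ^ 2 ≤ (1 / 6) * T) := by
    intro x hx
    rw [hBad, Finset.mem_sdiff, Finset.mem_filter] at hx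
    tauto
  have hsum : (Bad.card : ℝ) * ((1 / 6) * T) ≤ Φ := by
    calc (Bad.card : ℝ) * ((1 / 6) * T)
        ≤ ∑ x ∈ Bad, ‖x - μ‖ ^ 2 := by
          rw [← nsmul_eq_mul]
          exact Finset.card_nsmul_le_sum Bad _ _ (fun x hx => le_of_lt (lt_of_not_ge (hBadmem x hx)))
      _ ≤ Φ := Finset.sum_le_sum_of_subset_of_nonneg hBadA (fun x _ _ => by positivity)
  by_cases hTz : T = 0
  · have hΦz : Φ = 0 := by
      rw [hTz] at key; simp at key; linarith
    have : Bad = ∅ := by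
      rw [Finset.eq_empty_iff_forall_notMem]
      intro x hx
      have hx0 : ‖x - μ‖ ^ 2 = 0 := by
        have := (Finset.sum_eq_zero_iff_of_nonneg (fun y _ => by positivity)).mp hΦz x (hBadA hx)
        exact this
      exact hBadmem x hx (by rw [hx0, hTz]; norm_num)
    rw [this]
    simp
  · have hTpos : 0 < T := lt_of_le_of_ne hT0 (Ne.symm hTz)
    have hn0 : (0:ℝ) ≤ (A.card : ℝ) := Nat.cast_nonneg _
    nlinarith [hsum, key, mul_nonneg (Nat.cast_nonneg Bad.card : (0:ℝ) ≤ Bad.card) hT0]
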